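/- Let G be a nilpotent group of class at most n+1 (n ≥ 1) and x, g ∈ G. For integers a₁,…,a_{n+1}, and any j ∈ {1,…,n+1}, the element [x^{a_j}, g^{a_1},…, g^{a_{j-1}}, g^{a_{j+1}},…, g^{a_{n+1}}] equals [x, g, g, …, g]^{a₁a₂⋯a_{n+1}} (g repeated n times); in particular it is independent of j (Protocol II correctness). -/

import Mathlib

/-- The commutator `[a,b] = a⁻¹b⁻¹ab`. -/
def gcomm {G : Type*} [Group G] (a b : G) : G := a⁻¹ * b⁻¹ * a * b

/-- Conjugation `g^h = h⁻¹gh`. -/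
def gconj {G : Type*} [Group G] (g h : G) : G := h⁻¹ * g * h

/-- Left-normed commutator `[x, l₁, l₂, …]`. -/
def commList {G : Type*} [Group G] (x : G) (l : List G) : G := l.foldl gcomm x

/-- Left-normed commutator of a list: `[g₁, …, g_k]` (equal to `1` for the empty list). -/
def listComm {G : Type*} [Group G] : List G → G
  | [] => 1
  | x :: xs => commList x xs

section aux

open scoped commutatorElement

variable {G : Type*} [Group G]

lemma gcomm_eq (a b : G) : gcomm a b = ⁅a⁻¹, b⁻¹⁆ := by
  simp [gcomm, commutatorElement_def]

lemma gcomm_eq_one_iff {a b : G} : gcomm a b = 1 ↔ Commute a b := by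
  rw [gcomm_eq, commutatorElement_eq_one_iff_commute]
  exact ⟨fun h => by simpa using h.inv_inv, fun h => h.inv_inv⟩

lemma map_gcomm {H : Type*} [Group H] (f : G →* H) (a b : G) :
    f (gcomm a b) = gcomm (f a) (f b) := by
  simp [gcomm]

lemma commList_cons (x w : G) (l : List G) :
    commList x (w :: l) = commList (gcomm x w) l := rfl

/-- membership: if `a ∈ γ_t` then `gcomm a y ∈ γ_{t+1}`. -/
lemma gcomm_mem_lcs_succ {t : ℕ} {a : G} (ha : a ∈ Subgroup.lowerCentralSeries (⊤ : Subgroup G) t) (y : G) :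
    gcomm a y ∈ Subgroup.lowerCentralSeries (⊤ : Subgroup G) (t + 1) := by
  rw [gcomm_eq, Subgroup.lowerCentralSeries_succ]
  exact Subgroup.subset_closure ⟨a⁻¹, inv_mem ha, y⁻¹, Subgroup.mem_top _, by
    simp [commutatorElement_def]⟩

lemma gcomm_mem_lcs_succ' {t : ℕ} {a : G} (ha : a ∈ Subgroup.lowerCentralSeries (⊤ : Subgroup G) t) (y : G) :
    gcomm y a ∈ Subgroup.lowerCentralSeries (⊤ : Subgroup G) (t + 1) := by
  have : gcomm y a = (gcomm a y)⁻¹ := by simp [gcomm]; group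
  rw [this]
  exact inv_mem (gcomm_mem_lcs_succ ha y)

lemma gcomm_mul_left (u e w : G) :
    gcomm (u * e) w = gcomm u w * (gcomm (gcomm u w) e * gcomm e w) := by
  simp only [gcomm]; group

/-- Error absorption: multiplying the seed by an element deep in the lower
central series only changes the iterated commutator by something even deeper. -/
lemma commList_mul_err (l : List G) : ∀ (t : ℕ) (u e : G),
    e ∈ Subgroup.lowerCentralSeries (⊤ : Subgroup G) t →
    ∃ e' ∈ Subgroup.lowerCentralSeries (⊤ : Subgroup G) (t + l.length),
      commList (u * e) l = commList u l * e' := by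
  induction l with
  | nil => intro t u e he; exact ⟨e, by simpa using he, rfl⟩
  | cons w l ih =>
      intro t u e he
      have he2 : gcomm (gcomm u w) e * gcomm e w ∈ Subgroup.lowerCentralSeries (⊤ : Subgroup G) (t + 1) :=
        mul_mem (gcomm_mem_lcs_succ' he _) (gcomm_mem_lcs_succ he w)
      obtain ⟨e', he', hcomm⟩ := ih (t + 1) (gcomm u w) _ he2
      refine ⟨e', by simpa [List.length_cons, Nat.add_assoc, Nat.add_comm 1] using he', ?_⟩
      rw [commList_cons, gcomm_mul_left, hcomm, commList_cons]

/-- If `c = gcomm x g` commutes with `x` and `g`, then `gcomm (x^a) (g^b) = c^(a*b)`. -/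
lemma gcomm_zpow_central (x g : G) (h1 : Commute (gcomm x g) x) (h2 : Commute (gcomm x g) g)
    (a b : ℤ) : gcomm (x ^ a) (g ^ b) = (gcomm x g) ^ (a * b) := by
  set c := gcomm x g with hc
  have conjlem : ∀ (h y : G) (a : ℤ), (h⁻¹ * y * h) ^ a = h⁻¹ * y ^ a * h := by
    intro h y a
    simpa [MulAut.conj_apply] using (map_zpow (MulAut.conj h⁻¹) y a).symm
  have h4 : g⁻¹ * x * g = x * c := by simp only [hc, gcomm]; group
  have h3 : g * x * g⁻¹ = x * c⁻¹ := by
    calc g * x * g⁻¹ = g * (x * c) * (c⁻¹ * g⁻¹) := by group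
      _ = g * (g⁻¹ * x * g) * (c⁻¹ * g⁻¹) := by rw [h4]
      _ = x * (g * c⁻¹ * g⁻¹) := by group
      _ = x * c⁻¹ := by rw [show g * c⁻¹ * g⁻¹ = c⁻¹ by rw [← h2.inv_left.eq]; group]
  have key : ∀ b : ℤ, (g ^ b)⁻¹ * x * g ^ b = x * c ^ b := by
    intro b
    induction b using Int.induction_on with
    | zero => simp
    | succ b ihb =>
        have hgb : g ^ ((b : ℤ) + 1) = g ^ (b : ℤ) * g := by rw [zpow_add, zpow_one]
        rw [hgb, mul_inv_rev]
        calc g⁻¹ * (g ^ (b : ℤ))⁻¹ * x * (g ^ (b : ℤ) * g)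
            = g⁻¹ * ((g ^ (b : ℤ))⁻¹ * x * g ^ (b : ℤ)) * g := by group
          _ = g⁻¹ * (x * c ^ (b : ℤ)) * g := by rw [ihb]
          _ = (g⁻¹ * x * g) * (g⁻¹ * c ^ (b : ℤ) * g) := by group
          _ = (x * c) * (g⁻¹ * c ^ (b : ℤ) * g) := by rw [h4]
          _ = (x * c) * c ^ (b : ℤ) := by
              rw [show g⁻¹ * c ^ (b : ℤ) * g = c ^ (b : ℤ) by
                rw [mul_assoc, (h2.zpow_left (b : ℤ)).eq]; group]
          _ = x * c ^ ((b : ℤ) + 1) := by rw [zpow_add, zpow_one]; group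
    | pred b ihb =>
        have hgb : g ^ (-(b : ℤ) - 1) = g ^ (-(b : ℤ)) * g⁻¹ := by
          rw [sub_eq_add_neg, zpow_add, zpow_neg_one]
        rw [hgb, mul_inv_rev, inv_inv]
        calc g * (g ^ (-(b:ℤ)))⁻¹ * x * (g ^ (-(b:ℤ)) * g⁻¹)
            = g * ((g ^ (-(b:ℤ)))⁻¹ * x * g ^ (-(b:ℤ))) * g⁻¹ := by group
          _ = g * (x * c ^ (-(b:ℤ))) * g⁻¹ := by rw [ihb]
          _ = (g * x * g⁻¹) * (g * c ^ (-(b:ℤ)) * g⁻¹) := by group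
          _ = (x * c⁻¹) * (g * c ^ (-(b:ℤ)) * g⁻¹) := by rw [h3]
          _ = (x * c⁻¹) * c ^ (-(b:ℤ)) := by
              rw [show g * c ^ (-(b:ℤ)) * g⁻¹ = c ^ (-(b:ℤ)) by
                rw [← (h2.zpow_left (-(b:ℤ))).eq]; group]
          _ = x * c ^ (-(b:ℤ) - 1) := by
              rw [sub_eq_add_neg, zpow_add, zpow_neg_one]; group
  have key2 : (g ^ b)⁻¹ * x ^ a * g ^ b = x ^ a * c ^ (a * b) := by
    rw [← conjlem (g ^ b) x a, key b, (h1.symm.zpow_right b).mul_zpow a, ← zpow_mul,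
      mul_comm b a]
  calc gcomm (x ^ a) (g ^ b) = (x ^ a)⁻¹ * ((g ^ b)⁻¹ * x ^ a * g ^ b) := by
        simp [gcomm]; group
    _ = (x ^ a)⁻¹ * (x ^ a * c ^ (a * b)) := by rw [key2]
    _ = c ^ (a * b) := by group

/-- The bilinearity step modulo deeper terms. -/
lemma gcomm_zpow_step {k : ℕ} {x : G} (g : G) (hx : x ∈ Subgroup.lowerCentralSeries (⊤ : Subgroup G) k) (a b : ℤ) :
    ∃ e ∈ Subgroup.lowerCentralSeries (⊤ : Subgroup G) (k + 2),
      gcomm (x ^ a) (g ^ b) = (gcomm x g) ^ (a * b) * e := by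
  set N := Subgroup.lowerCentralSeries (⊤ : Subgroup G) (k + 2) with hN
  let mk : G →* G ⧸ N := QuotientGroup.mk' N
  have central : ∀ y : G, Commute (mk (gcomm x g)) (mk y) := by
    intro y
    rw [← gcomm_eq_one_iff, ← map_gcomm, ← MonoidHom.mem_ker, QuotientGroup.ker_mk']
    have h1 : gcomm x g ∈ Subgroup.lowerCentralSeries (⊤ : Subgroup G) (k + 1) := gcomm_mem_lcs_succ hx g
    exact gcomm_mem_lcs_succ h1 y
  have hq : mk (gcomm (x ^ a) (g ^ b)) = mk ((gcomm x g) ^ (a * b)) := by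
    rw [map_gcomm, map_zpow, map_zpow, map_zpow, map_gcomm]
    exact gcomm_zpow_central (mk x) (mk g)
      (by rw [← map_gcomm]; exact central x) (by rw [← map_gcomm]; exact central g) a b
  refine ⟨((gcomm x g) ^ (a * b))⁻¹ * gcomm (x ^ a) (g ^ b), ?_, by group⟩
  rw [← QuotientGroup.ker_mk' N, MonoidHom.mem_ker, map_mul, map_inv, hq]
  exact inv_mul_cancel _

lemma main_lemma (n : ℕ) (h : Subgroup.lowerCentralSeries (⊤ : Subgroup G) (n + 1) = ⊥) (g : G) :
    ∀ (m k : ℕ), n ≤ k + m → ∀ x ∈ Subgroup.lowerCentralSeries (⊤ : Subgroup G) k, ∀ (a : ℤ) (b : Fin m → ℤ),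
      commList (x ^ a) (List.ofFn fun i => g ^ b i)
        = (commList x (List.replicate m g)) ^ (a * ∏ i, b i) := by
  intro m
  induction m with
  | zero => intro k _ x _ a b; simp [commList]
  | succ m ih =>
      intro k hkm x hx a b
      have hofn : (List.ofFn fun i : Fin (m+1) => g ^ b i)
          = g ^ b 0 :: List.ofFn fun i : Fin m => g ^ b i.succ := by
        rw [List.ofFn_succ]
      rw [hofn, commList_cons]
      obtain ⟨e, he, hstep⟩ := gcomm_zpow_step g hx a (b 0)
      rw [hstep]
      obtain ⟨e', he', hcomm⟩ := commList_mul_err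
        (List.ofFn fun i : Fin m => g ^ b i.succ) (k + 2) _ e he
      have he'1 : e' = 1 := by
        have hle : Subgroup.lowerCentralSeries (⊤ : Subgroup G) (k + 2 + (List.ofFn fun i : Fin m => g ^ b i.succ).length)
            ≤ Subgroup.lowerCentralSeries (⊤ : Subgroup G) (n + 1) := by
          apply Subgroup.lowerCentralSeries_antitone
          simp only [List.length_ofFn]
          omega
        have := hle he'
        rw [h] at this
        simpa using this
      rw [hcomm, he'1, mul_one]
      have hc : gcomm x g ∈ Subgroup.lowerCentralSeries (⊤ : Subgroup G) (k + 1) := gcomm_mem_lcs_succ hx g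
      rw [ih (k + 1) (by omega) (gcomm x g) hc (a * b 0) (fun i => b i.succ)]
      have hrep : commList (gcomm x g) (List.replicate m g)
          = commList x (List.replicate (m + 1) g) := by
        rw [List.replicate_succ, commList_cons]
      rw [hrep, Fin.prod_univ_succ, mul_assoc]

end aux

theorem stmt15 {G : Type*} [Group G] (n : ℕ) (hn : 1 ≤ n)
    (h : Subgroup.lowerCentralSeries (⊤ : Subgroup G) (n + 1) = ⊥)
    (x g : G) (a : Fin (n + 1) → ℤ) (j : Fin (n + 1)) :
    commList (x ^ a j) (List.ofFn (fun i : Fin n => g ^ a (j.succAbove i)))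
      = (commList x (List.replicate n g)) ^ (∏ i, a i) := by
  have := main_lemma n h g n 0 (by omega) x (by simp [Subgroup.lowerCentralSeries_zero])
    (a j) (fun i => a (j.succAbove i))
  rw [this, ← Fin.prod_univ_succAbove a j]
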